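/- arXiv:math/0405474 — 4 statements merged into one kernel-verified Lean document; each statement's English description precedes it below -/
import Mathlib

section
/- Let α be a finite set with a distinguished element b. On the free 𝔽₂-vector space V with basis the subsets of α, define ν(S) = ∑_{x ∉ S} (S ∪ {x}) and X(S) = S \ {b} if b ∈ S, and X(S) = 0 if b ∉ S (both extended linearly). Then ν ∘ X + X ∘ ν = id on V. -/
private lemma add_self_zmod2 {β : Type*} [AddCommMonoid β] [Module (ZMod 2) β]
    (v : β) : v + v = 0 := by
  have h : (2 : ZMod 2) = 0 := rfl
  rw [← two_smul (ZMod 2) v, h, zero_smul]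

/-- On the free `𝔽₂`-vector space with basis the subsets of a finite set `α` with a
distinguished element `b`, the flip map `ν` and the base-point map `X` satisfy
`ν ∘ₗ X + X ∘ₗ ν = id`. -/
theorem nu_X_homotopy {α : Type*} [Fintype α] [DecidableEq α] (b : α)
    (ν X : (Finset α →₀ ZMod 2) →ₗ[ZMod 2] (Finset α →₀ ZMod 2))
    (hν : ∀ S : Finset α,
      ν (Finsupp.single S 1) = ∑ x ∈ Sᶜ, Finsupp.single (insert x S) 1)
    (hX : ∀ S : Finset α,
      X (Finsupp.single S 1) =
        if b ∈ S then Finsupp.single (S.erase b) 1 else 0) :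
    ν ∘ₗ X + X ∘ₗ ν = LinearMap.id := by
  apply Finsupp.lhom_ext'
  intro S
  apply LinearMap.ext_ring
  simp only [LinearMap.comp_apply, Finsupp.lsingle_apply, LinearMap.add_apply, LinearMap.comp_apply, LinearMap.id_apply, hX, hν, map_sum]
  by_cases hb : b ∈ S
  · rw [if_pos hb, hν]
    have h1 : ∀ x ∈ Sᶜ, (if b ∈ insert x S then Finsupp.single ((insert x S).erase b) (1 : ZMod 2) else 0)
        = Finsupp.single (insert x (S.erase b)) 1 := by
      intro x hx
      rw [if_pos (Finset.mem_insert_of_mem hb),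
        Finset.erase_insert_of_ne (by rintro rfl; exact (Finset.mem_compl.mp hx) hb)]
    rw [Finset.sum_congr rfl h1, Finset.compl_erase,
      Finset.sum_insert (by simpa using hb), Finset.insert_erase hb, add_assoc,
      add_self_zmod2, add_zero]
  · rw [if_neg hb, map_zero, zero_add]
    have h1 : ∀ x ∈ Sᶜ, (if b ∈ insert x S then Finsupp.single ((insert x S).erase b) (1 : ZMod 2) else 0)
        = if x = b then Finsupp.single S 1 else 0 := by
      intro x _
      by_cases hxb : x = b
      · subst hxb
        rw [if_pos (Finset.mem_insert_self x S), if_pos rfl, Finset.erase_insert hb]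
      · rw [if_neg (by simp [Ne.symm hxb, hb]), if_neg hxb]
    rw [Finset.sum_congr rfl h1, Finset.sum_ite_eq' Sᶜ b, if_pos (Finset.mem_compl.mpr hb)]
end

section
/- Let n ≥ 1 and 0 ≤ k ≤ n−1. The inclusion matrix W over 𝔽₂, whose rows are indexed by k-element subsets and columns by (k+1)-element subsets of an n-element set, with entry 1 exactly when the k-subset is contained in the (k+1)-subset, has rank equal to the binomial coefficient C(n−1, k) over 𝔽₂. -/
open Finset

abbrev SubK (n k : ℕ) := {S : Finset (Fin n) // S.card = k}

noncomputable def IncM (n k : ℕ) : Matrix (SubK n k) (SubK n (k+1)) (ZMod 2) :=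
  Matrix.of fun S T => if S.1 ⊆ T.1 then (1 : ZMod 2) else 0

noncomputable def Dmap (n k : ℕ) : (SubK n (k+1) → ZMod 2) →ₗ[ZMod 2] (SubK n k → ZMod 2) :=
  (IncM n k).mulVecLin

lemma D_single (n k : ℕ) (U : SubK n (k+1)) (S : SubK n k) :
    Dmap n k (Pi.single U 1) S = if S.1 ⊆ U.1 then 1 else 0 := by
  simp [Dmap, IncM, Matrix.mulVecLin, Matrix.mulVec, dotProduct, Pi.single_apply,
    mul_ite, mul_one, mul_zero, Finset.sum_ite_eq']

lemma erase_card (n k : ℕ) (T : SubK n (k+1)) {x0 : Fin n} (h : x0 ∈ T.1) :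
    (T.1.erase x0).card = k := by
  rw [Finset.card_erase_of_mem h, T.2]; rfl

noncomputable def Hmap (n k : ℕ) (x0 : Fin n) :
    (SubK n k → ZMod 2) →ₗ[ZMod 2] (SubK n (k+1) → ZMod 2) where
  toFun f T := if h : x0 ∈ T.1 then f ⟨T.1.erase x0, erase_card n k T h⟩ else 0
  map_add' f g := by funext T; split <;> rename_i h <;> simp [h]
  map_smul' c f := by funext T; split <;> rename_i h <;> simp [h]

lemma H_single (n k : ℕ) (x0 : Fin n) (U : SubK n k) (T : SubK n (k+1)) :
    Hmap n k x0 (Pi.single U 1) T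
      = if x0 ∈ T.1 ∧ T.1.erase x0 = U.1 then 1 else 0 := by
  simp only [Hmap, LinearMap.coe_mk, AddHom.coe_mk]
  split
  · rename_i h
    rw [Pi.single_apply]
    simp only [h, true_and]
    congr 1
    rw [Subtype.ext_iff]
  · rename_i h
    simp [h]

lemma key (n k : ℕ) (x0 : Fin n) (T U : SubK n (k+1)) :
    ((if x0 ∈ T.1 ∧ T.1.erase x0 ⊆ U.1 then 1 else 0) : ZMod 2)
      + (if ¬ x0 ∈ U.1 ∧ T.1 ⊆ insert x0 U.1 then 1 else 0)
      = if T = U then 1 else 0 := by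
  by_cases hTU : T = U
  · subst hTU
    by_cases hx : x0 ∈ T.1
    · simp [hx, Finset.erase_subset]
    · simp [hx, Finset.subset_insert]
  · have hcard : T.1.card = U.1.card := by rw [T.2, U.2]
    have hne : T.1 ≠ U.1 := fun h => hTU (Subtype.ext h)
    have hPQ : (x0 ∈ T.1 ∧ T.1.erase x0 ⊆ U.1) ↔ (¬ x0 ∈ U.1 ∧ T.1 ⊆ insert x0 U.1) := by
      constructor
      · rintro ⟨hxT, hsub⟩
        have hxU : ¬ x0 ∈ U.1 := by
          intro hxU
          apply hne
          apply Finset.eq_of_subset_of_card_le _ (le_of_eq hcard.symm)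
          intro a ha
          by_cases hax : a = x0
          · subst hax; exact hxU
          · exact hsub (Finset.mem_erase.2 ⟨hax, ha⟩)
        refine ⟨hxU, fun a ha => ?_⟩
        by_cases hax : a = x0
        · subst hax; exact Finset.mem_insert_self _ _
        · exact Finset.mem_insert_of_mem (hsub (Finset.mem_erase.2 ⟨hax, ha⟩))
      · rintro ⟨hxU, hsub⟩
        have hxT : x0 ∈ T.1 := by
          by_contra hxT
          apply hne
          apply Finset.eq_of_subset_of_card_le _ (le_of_eq hcard.symm)
          intro a ha
          rcases Finset.mem_insert.1 (hsub ha) with h | h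
          · exact absurd (h ▸ ha) hxT
          · exact h
        refine ⟨hxT, fun a ha => ?_⟩
        rcases Finset.mem_erase.1 ha with ⟨hax, haT⟩
        rcases Finset.mem_insert.1 (hsub haT) with h | h
        · exact absurd h hax
        · exact h
    rw [if_congr hPQ rfl rfl, if_neg hTU]
    by_cases hQ : ¬ x0 ∈ U.1 ∧ T.1 ⊆ insert x0 U.1
    · rw [if_pos hQ]; decide
    · rw [if_neg hQ]; decide

lemma homotopy (n k : ℕ) (x0 : Fin n) :
    (Hmap n k x0) ∘ₗ (Dmap n k) + (Dmap n (k+1)) ∘ₗ (Hmap n (k+1) x0)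
      = LinearMap.id := by
  apply (Pi.basisFun (ZMod 2) (SubK n (k+1))).ext
  intro U
  funext T
  simp only [LinearMap.add_apply, LinearMap.comp_apply, Pi.basisFun_apply, LinearMap.id_apply,
    Pi.add_apply]
  -- first term
  have h1 : Hmap n k x0 (Dmap n k (Pi.single U 1)) T
      = if x0 ∈ T.1 ∧ T.1.erase x0 ⊆ U.1 then 1 else 0 := by
    simp only [Hmap, LinearMap.coe_mk, AddHom.coe_mk]
    split
    · rename_i h
      rw [D_single]
      simp [h]
    · rename_i h
      simp [h]
  -- second term
  have h2 : Dmap n (k+1) (Hmap n (k+1) x0 (Pi.single U 1)) T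
      = if ¬ x0 ∈ U.1 ∧ T.1 ⊆ insert x0 U.1 then 1 else 0 := by
    simp only [Dmap, Matrix.mulVecLin_apply, Matrix.mulVec, dotProduct, IncM,
      Matrix.of_apply]
    by_cases hx : x0 ∈ U.1
    · rw [Finset.sum_eq_zero, if_neg (by simp [hx])]
      intro V _
      rw [H_single]
      have : ¬ (x0 ∈ V.1 ∧ V.1.erase x0 = U.1) := by
        rintro ⟨hV, hVU⟩
        exact (Finset.notMem_erase x0 V.1) (hVU ▸ hx)
      rw [if_neg this, mul_zero]
    · have hV0card : (insert x0 U.1).card = k + 2 := by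
        rw [Finset.card_insert_of_notMem hx, U.2]
      set V0 : SubK n (k+2) := ⟨insert x0 U.1, hV0card⟩ with hV0
      rw [Finset.sum_eq_single V0]
      · rw [H_single]
        have : x0 ∈ V0.1 ∧ V0.1.erase x0 = U.1 := by
          refine ⟨Finset.mem_insert_self _ _, ?_⟩
          rw [Finset.erase_insert hx]
        rw [if_pos this]
        simp [hx, V0]
      · intro V _ hVne
        rw [H_single]
        have : ¬ (x0 ∈ V.1 ∧ V.1.erase x0 = U.1) := by
          rintro ⟨hV, hVU⟩
          apply hVne
          apply Subtype.ext
          show V.1 = insert x0 U.1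
          rw [← hVU, Finset.insert_erase hV]
        rw [if_neg this, mul_zero]
      · intro h
        exact absurd (Finset.mem_univ V0) h
  rw [h1, h2, key, Pi.single_apply]

lemma D_comp_D (n k : ℕ) : (Dmap n k) ∘ₗ (Dmap n (k+1)) = 0 := by
  apply (Pi.basisFun (ZMod 2) (SubK n (k+2))).ext
  intro V
  funext S
  simp only [LinearMap.comp_apply, Pi.basisFun_apply, LinearMap.zero_apply, Pi.zero_apply]
  have hD : Dmap n (k+1) (Pi.single V 1) = fun T => if T.1 ⊆ V.1 then 1 else 0 :=
    funext fun T => D_single n (k+1) V T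
  rw [hD]
  show ∑ T : SubK n (k+1), (if S.1 ⊆ T.1 then (1 : ZMod 2) else 0)
      * (if T.1 ⊆ V.1 then 1 else 0) = 0
  have hterm : ∀ T : SubK n (k+1),
      (if S.1 ⊆ T.1 then (1 : ZMod 2) else 0) * (if T.1 ⊆ V.1 then 1 else 0)
        = if S.1 ⊆ T.1 ∧ T.1 ⊆ V.1 then 1 else 0 := by
    intro T
    by_cases h1 : S.1 ⊆ T.1 <;> by_cases h2 : T.1 ⊆ V.1 <;> simp [h1, h2]
  simp only [hterm]
  rw [← Finset.sum_filter]
  have hmemfil : ∀ T : SubK n (k+1),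
      T ∈ Finset.univ.filter (fun T : SubK n (k+1) => S.1 ⊆ T.1 ∧ T.1 ⊆ V.1)
        ↔ (S.1 ⊆ T.1 ∧ T.1 ⊆ V.1) := by
    intro T; simp [Finset.mem_filter]
  have hgcard : ∀ T : SubK n (k+1), S.1 ⊆ T.1 → T.1 ⊆ V.1 →
      (S.1 ∪ (V.1 \ T.1)).card = k + 1 := by
    intro T h1 h2
    have hdisj : Disjoint S.1 (V.1 \ T.1) := by
      rw [Finset.disjoint_left]
      intro a haS haVT
      exact (Finset.mem_sdiff.1 haVT).2 (h1 haS)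
    rw [Finset.card_union_of_disjoint hdisj, Finset.card_sdiff_of_subset h2, S.2, T.2, V.2]
    omega
  refine Finset.sum_involution
    (g := fun T hT => ⟨S.1 ∪ (V.1 \ T.1),
      hgcard T ((hmemfil T).1 hT).1 ((hmemfil T).1 hT).2⟩) ?_ ?_ ?_ ?_
  · intro T hT; decide
  · intro T hT _
    rcases (hmemfil T).1 hT with ⟨h1, h2⟩
    intro hEq
    have heq : S.1 ∪ (V.1 \ T.1) = T.1 := congrArg Subtype.val hEq
    have hVT : V.1 \ T.1 ⊆ T.1 := by
      intro a ha
      rw [← heq]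
      exact Finset.mem_union_right _ ha
    have hVsub : V.1 ⊆ T.1 := by
      intro a ha
      by_cases haT : a ∈ T.1
      · exact haT
      · exact hVT (Finset.mem_sdiff.2 ⟨ha, haT⟩)
    have := Finset.card_le_card hVsub
    rw [V.2, T.2] at this
    omega
  · intro T hT
    rcases (hmemfil T).1 hT with ⟨h1, h2⟩
    refine (hmemfil _).2 ⟨Finset.subset_union_left, ?_⟩
    exact Finset.union_subset (h1.trans h2) Finset.sdiff_subset
  · intro T hT
    rcases (hmemfil T).1 hT with ⟨h1, h2⟩
    apply Subtype.ext
    show S.1 ∪ (V.1 \ (S.1 ∪ (V.1 \ T.1))) = T.1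
    ext a
    have h1a := @h1 a
    have h2a := @h2 a
    simp only [Finset.mem_union, Finset.mem_sdiff]
    tauto

lemma rank_add (n k : ℕ) (hn : 1 ≤ n) :
    (IncM n k).rank + (IncM n (k+1)).rank = Nat.choose n (k+1) := by
  have x0 : Fin n := ⟨0, hn⟩
  have hker : LinearMap.ker (Dmap n k) = LinearMap.range (Dmap n (k+1)) := by
    apply le_antisymm
    · intro g hg
      refine ⟨Hmap n (k+1) x0 g, ?_⟩
      have h := congrArg (fun L => L g) (homotopy n k x0)
      simp only [LinearMap.add_apply, LinearMap.comp_apply, LinearMap.id_apply] at h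
      rw [LinearMap.mem_ker.mp hg, map_zero, zero_add] at h
      exact h
    · rintro _ ⟨f, rfl⟩
      apply LinearMap.mem_ker.2
      have h := congrArg (fun L => L f) (D_comp_D n k)
      simpa using h
  have hrn := LinearMap.finrank_range_add_finrank_ker (Dmap n k)
  rw [hker, Module.finrank_fintype_fun_eq_card, Fintype.card_finset_len,
    Fintype.card_fin] at hrn
  show Module.finrank (ZMod 2) (LinearMap.range (Dmap n k))
      + Module.finrank (ZMod 2) (LinearMap.range (Dmap n (k+1))) = Nat.choose n (k+1)
  exact hrn

lemma incm_rank_top (n k : ℕ) (h : n ≤ k) : (IncM n k).rank = 0 := by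
  haveI : IsEmpty (SubK n (k+1)) := ⟨fun S => by
    have h2 : S.1.card ≤ n := by
      simpa using Finset.card_le_card (Finset.subset_univ S.1)
    rw [S.2] at h2
    omega⟩
  have hle := Matrix.rank_le_card_width (IncM n k)
  rw [Fintype.card_eq_zero] at hle
  omega

lemma rank_aux (n : ℕ) (hn : 1 ≤ n) :
    ∀ m k : ℕ, n ≤ k + m → (IncM n k).rank = Nat.choose (n-1) k := by
  intro m
  induction m with
  | zero =>
    intro k h
    rw [incm_rank_top n k (by omega), Nat.choose_eq_zero_of_lt (by omega)]
  | succ m ih =>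
    intro k h
    by_cases hkm : n ≤ k + m
    · exact ih k hkm
    · have h2 := ih (k+1) (by omega)
      have h3 := rank_add n k hn
      have hpas : Nat.choose n (k+1) = Nat.choose (n-1) k + Nat.choose (n-1) (k+1) := by
        have hn1 : n - 1 + 1 = n := by omega
        conv_lhs => rw [← hn1]
        rw [Nat.choose_succ_succ' (n-1) k]
      omega

/-- The inclusion matrix over `𝔽₂` between `k`-subsets and `(k+1)`-subsets of an
`n`-element set has `𝔽₂`-rank equal to `C(n-1, k)`. -/
theorem inclusion_matrix_rank (n k : ℕ) (hn : 1 ≤ n) (hk : k ≤ n - 1) :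
    (Matrix.of fun (S : {S : Finset (Fin n) // S.card = k})
        (T : {T : Finset (Fin n) // T.card = k + 1}) =>
      if S.1 ⊆ T.1 then (1 : ZMod 2) else 0).rank = Nat.choose (n - 1) k := by
  have hM : (Matrix.of fun (S : {S : Finset (Fin n) // S.card = k})
        (T : {T : Finset (Fin n) // T.card = k + 1}) =>
      if S.1 ⊆ T.1 then (1 : ZMod 2) else 0) = IncM n k := rfl
  rw [hM]
  exact rank_aux n hn n k (by omega)
end

section
/- Let α be a nonempty finite set and fix b ∈ α. In the free 𝔽₂-vector space on subsets of α, let 𝒢⁻ be the subspace spanned by subsets containing b, and let ν(S) = ∑_{x ∉ S} (S ∪ {x}) be the flip differential. Then: (1) 𝒢⁻ is ν-invariant and, as a complex graded by cardinality (shifted down by one), it is isomorphic to the flip complex on subsets of α \ {b}; (2) the quotient complex 𝒢/𝒢⁻ is also isomorphic to the flip complex on subsets of α \ {b}. -/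
section Aux

variable {α : Type*} [DecidableEq α] (b : α)

private lemma sub_erase (S : Finset α) :
    (S.erase b).subtype (· ≠ b) = S.subtype (· ≠ b) := by
  ext a
  simp [Finset.mem_subtype, Finset.mem_erase, a.2]

private lemma sub_of_map (T : Finset {x : α // x ≠ b}) :
    ((T.map (Function.Embedding.subtype _)).subtype (· ≠ b)) = T := by
  ext a
  simp [Finset.mem_subtype, Subtype.ext_iff, a.2]

private lemma sub_of_insert_map (T : Finset {x : α // x ≠ b}) :
    ((insert b (T.map (Function.Embedding.subtype _))).subtype (· ≠ b)) = T := by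
  ext a
  simp [Finset.mem_subtype, Subtype.ext_iff, a.2]

private lemma mapSub_of_not_mem (S : Finset α) (hb : b ∉ S) :
    (S.subtype (· ≠ b)).map (Function.Embedding.subtype _) = S := by
  rw [Finset.subtype_map, Finset.filter_eq_self]
  intro x hx
  exact fun h => hb (h ▸ hx)

private lemma insert_map_sub (S : Finset α) (hb : b ∈ S) :
    insert b ((S.subtype (· ≠ b)).map (Function.Embedding.subtype _)) = S := by
  rw [Finset.subtype_map]
  ext x
  by_cases hx : x = b <;> simp [Finset.mem_insert, Finset.mem_filter, hx, hb]

private lemma sub_insert (S : Finset α) (x : α) (hx : x ≠ b) :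
    (insert x S).subtype (· ≠ b) = insert ⟨x, hx⟩ (S.subtype (· ≠ b)) := by
  ext a
  simp [Finset.mem_subtype, Finset.mem_insert, Subtype.ext_iff]

private lemma sum_reindex [Fintype α] {M : Type*} [AddCommMonoid M] (S : Finset α)
    (f : Finset {x : α // x ≠ b} → M) :
    ∑ x ∈ Sᶜ.erase b, f ((insert x S).subtype (· ≠ b)) =
      ∑ y ∈ (S.subtype (· ≠ b))ᶜ, f (insert y (S.subtype (· ≠ b))) := by
  refine Finset.sum_bij' (fun x hx => (⟨x, (Finset.mem_erase.mp hx).1⟩ : {x : α // x ≠ b}))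
    (fun y _ => (y : α)) ?_ ?_ ?_ ?_ ?_
  · intro a ha
    rcases Finset.mem_erase.mp ha with ⟨h1, h2⟩
    simp only [Finset.mem_compl, Finset.mem_subtype]
    exact Finset.mem_compl.mp h2
  · intro y hy
    refine Finset.mem_erase.mpr ⟨y.2, Finset.mem_compl.mpr ?_⟩
    intro h
    exact (Finset.mem_compl.mp hy) (Finset.mem_subtype.mpr h)
  · intro a ha; rfl
  · intro y hy; rfl
  · intro a ha
    rw [sub_insert b S a (Finset.mem_erase.mp ha).1]

end Aux

/-- Inductive structure of the subset-flip complex: for a finite set `α` and `b ∈ α`,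
the subspace `𝒢⁻` spanned by the subsets containing `b` is invariant under the flip
differential `ν`, and both `𝒢⁻` (with cardinality grading shifted down by one) and the
quotient `𝒢/𝒢⁻` are isomorphic, as complexes, to the flip complex on subsets of
`α \ {b}` (with flip differential `ν'`). -/
theorem flip_subcomplex_and_quotient {α : Type*} [Fintype α] [DecidableEq α] (b : α)
    (ν : (Finset α →₀ ZMod 2) →ₗ[ZMod 2] (Finset α →₀ ZMod 2))
    (hν : ∀ S : Finset α,
      ν (Finsupp.single S 1) = ∑ x ∈ Sᶜ, Finsupp.single (insert x S) 1)
    (ν' : (Finset {x : α // x ≠ b} →₀ ZMod 2) →ₗ[ZMod 2]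
      (Finset {x : α // x ≠ b} →₀ ZMod 2))
    (hν' : ∀ T : Finset {x : α // x ≠ b},
      ν' (Finsupp.single T 1) = ∑ y ∈ Tᶜ, Finsupp.single (insert y T) 1)
    (G : Submodule (ZMod 2) (Finset α →₀ ZMod 2))
    (hG : G = Submodule.span (ZMod 2)
      {f | ∃ S : Finset α, b ∈ S ∧ f = Finsupp.single S 1}) :
    -- (1) `𝒢⁻` is `ν`-invariant
    (∀ v ∈ G, ν v ∈ G) ∧
    -- and, as a complex graded by cardinality (shifted down by one), it is isomorphic
    -- to the flip complex on subsets of `α \ {b}`: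
    (∃ e : G ≃ₗ[ZMod 2] (Finset {x : α // x ≠ b} →₀ ZMod 2),
      (∀ (S : Finset α) (_ : b ∈ S)
          (hmem : (Finsupp.single S 1 : Finset α →₀ ZMod 2) ∈ G),
        e ⟨Finsupp.single S 1, hmem⟩ =
          Finsupp.single ((S.erase b).subtype (· ≠ b)) 1) ∧
      (∀ (v : G) (hv : ν (v : Finset α →₀ ZMod 2) ∈ G), e ⟨ν v, hv⟩ = ν' (e v))) ∧
    -- (2) the quotient complex `𝒢/𝒢⁻` is also isomorphic to the flip complex on
    -- subsets of `α \ {b}`: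
    (∃ q : ((Finset α →₀ ZMod 2) ⧸ G) ≃ₗ[ZMod 2]
        (Finset {x : α // x ≠ b} →₀ ZMod 2),
      (∀ S : Finset α, b ∉ S →
        q (Submodule.Quotient.mk (Finsupp.single S 1)) =
          Finsupp.single (S.subtype (· ≠ b)) 1) ∧
      (∀ v : Finset α →₀ ZMod 2,
        q (Submodule.Quotient.mk (ν v)) = ν' (q (Submodule.Quotient.mk v)))) := by
  subst hG
  set s : Set (Finset α →₀ ZMod 2) :=
    {f | ∃ S : Finset α, b ∈ S ∧ f = Finsupp.single S 1} with hs
  set G := Submodule.span (ZMod 2) s with hG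
  -- basic maps
  set em : {x : α // x ≠ b} ↪ α := Function.Embedding.subtype _ with hem
  set P : (Finset α →₀ ZMod 2) →ₗ[ZMod 2] (Finset {x : α // x ≠ b} →₀ ZMod 2) :=
    Finsupp.lmapDomain (ZMod 2) (ZMod 2) (fun S => S.subtype (· ≠ b)) with hP
  set I : (Finset {x : α // x ≠ b} →₀ ZMod 2) →ₗ[ZMod 2] (Finset α →₀ ZMod 2) :=
    Finsupp.lmapDomain (ZMod 2) (ZMod 2) (fun T => insert b (T.map em)) with hI
  set J : (Finset {x : α // x ≠ b} →₀ ZMod 2) →ₗ[ZMod 2] (Finset α →₀ ZMod 2) :=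
    Finsupp.lmapDomain (ZMod 2) (ZMod 2) (fun T => T.map em) with hJ
  set Q : (Finset α →₀ ZMod 2) →ₗ[ZMod 2] (Finset {x : α // x ≠ b} →₀ ZMod 2) :=
    Finsupp.lsum (ZMod 2) (fun S => if b ∈ S then 0 else
      LinearMap.toSpanSingleton (ZMod 2) _ (Finsupp.single (S.subtype (· ≠ b)) 1)) with hQ
  have hPs : ∀ (S : Finset α) (c : ZMod 2),
      P (Finsupp.single S c) = Finsupp.single (S.subtype (· ≠ b)) c := by
    intro S c; simp [hP, Finsupp.lmapDomain_apply, Finsupp.mapDomain_single]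
  have hIs : ∀ (T : Finset {x : α // x ≠ b}) (c : ZMod 2),
      I (Finsupp.single T c) = Finsupp.single (insert b (T.map em)) c := by
    intro T c; simp [hI, Finsupp.lmapDomain_apply, Finsupp.mapDomain_single]
  have hJs : ∀ (T : Finset {x : α // x ≠ b}) (c : ZMod 2),
      J (Finsupp.single T c) = Finsupp.single (T.map em) c := by
    intro T c; simp [hJ, Finsupp.lmapDomain_apply, Finsupp.mapDomain_single]
  have hQs : ∀ (S : Finset α) (c : ZMod 2),
      Q (Finsupp.single S c) = if b ∈ S then 0 else Finsupp.single (S.subtype (· ≠ b)) c := by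
    intro S c
    simp only [hQ, Finsupp.lsum_single]
    split_ifs with h
    · simp
    · simp [LinearMap.toSpanSingleton_apply, Finsupp.smul_single]
  -- (1) invariance
  have hinv : ∀ v ∈ G, ν v ∈ G := by
    intro v hv
    refine Submodule.span_induction (p := fun v _ => ν v ∈ G) ?_ ?_ ?_ ?_ hv
    · rintro f ⟨S, hbS, rfl⟩
      rw [hν]
      exact Submodule.sum_mem _ fun x hx =>
        Submodule.subset_span ⟨insert x S, Finset.mem_insert_of_mem hbS, rfl⟩
    · simp
    · intro x y _ _ hx hy; rw [map_add]; exact Submodule.add_mem _ hx hy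
    · intro a x _ hx; rw [map_smul]; exact Submodule.smul_mem _ _ hx
  -- I lands in G
  have hIG : ∀ v, I v ∈ G := by
    intro v
    induction v using Finsupp.induction_linear with
    | zero => simp
    | add f g hf hg => rw [map_add]; exact Submodule.add_mem _ hf hg
    | single T c =>
      rw [hIs]
      have : (Finsupp.single (insert b (T.map em)) c :
          Finset α →₀ ZMod 2) = c • Finsupp.single (insert b (T.map em)) 1 := by
        simp [Finsupp.smul_single]
      rw [this]
      exact Submodule.smul_mem _ _
        (Submodule.subset_span ⟨_, Finset.mem_insert_self _ _, rfl⟩)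
  -- inverse on G side
  set Ig : (Finset {x : α // x ≠ b} →₀ ZMod 2) →ₗ[ZMod 2] G :=
    LinearMap.codRestrict G I hIG with hIg
  set F : G →ₗ[ZMod 2] (Finset {x : α // x ≠ b} →₀ ZMod 2) := P.comp G.subtype with hF
  have hFIg : F.comp Ig = LinearMap.id := by
    apply Finsupp.lhom_ext
    intro T c
    simp only [LinearMap.comp_apply, LinearMap.id_apply, hIg, hF]
    show P (I (Finsupp.single T c)) = Finsupp.single T c
    rw [hIs, hPs, sub_of_insert_map]
  have hIgF : ∀ v ∈ G, I (P v) = v := by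
    intro v hv
    refine Submodule.span_induction (p := fun v _ => I (P v) = v) ?_ ?_ ?_ ?_ hv
    · rintro f ⟨S, hbS, rfl⟩
      rw [hPs, hIs, insert_map_sub b S hbS]
    · simp
    · intro x y _ _ hx hy; rw [map_add, map_add, hx, hy]
    · intro a x _ hx; rw [map_smul, map_smul, hx]
  have hIgF' : Ig.comp F = LinearMap.id := by
    apply LinearMap.ext
    rintro ⟨v, hv⟩
    apply Subtype.ext
    exact hIgF v hv
  set e : G ≃ₗ[ZMod 2] (Finset {x : α // x ≠ b} →₀ ZMod 2) :=
    LinearEquiv.ofLinear F Ig hFIg hIgF' with he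
  have heval : ∀ (v : Finset α →₀ ZMod 2) (hv : v ∈ G), e ⟨v, hv⟩ = P v := fun _ _ => rfl
  -- commutation of P with ν on G
  have hPν : ∀ v ∈ G, P (ν v) = ν' (P v) := by
    intro v hv
    refine Submodule.span_induction (p := fun v _ => P (ν v) = ν' (P v)) ?_ ?_ ?_ ?_ hv
    · rintro f ⟨S, hbS, rfl⟩
      rw [hν, hPs, hν', map_sum]
      have hb' : b ∉ Sᶜ := Finset.mem_compl.not.mpr (by simpa using hbS)
      calc ∑ x ∈ Sᶜ, P (Finsupp.single (insert x S) 1)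
          = ∑ x ∈ Sᶜ.erase b, Finsupp.single ((insert x S).subtype (· ≠ b)) 1 := by
            rw [Finset.erase_eq_of_notMem hb']
            exact Finset.sum_congr rfl fun x _ => hPs _ _
        _ = ∑ y ∈ (S.subtype (· ≠ b))ᶜ,
              Finsupp.single (insert y (S.subtype (· ≠ b))) 1 :=
            sum_reindex b S (fun T => Finsupp.single T 1)
    · simp
    · intro x y _ _ hx hy
      rw [map_add, map_add, map_add, hx, hy, map_add]
    · intro a x _ hx
      rw [map_smul, map_smul, map_smul, hx, map_smul]
  -- quotient side
  have hker : G ≤ LinearMap.ker Q := by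
    rw [hG, Submodule.span_le]
    rintro f ⟨S, hbS, rfl⟩
    simp only [SetLike.mem_coe, LinearMap.mem_ker]
    rw [hQs, if_pos hbS]
  set Qbar : ((Finset α →₀ ZMod 2) ⧸ G) →ₗ[ZMod 2] (Finset {x : α // x ≠ b} →₀ ZMod 2) :=
    G.liftQ Q hker with hQbar
  set K : (Finset {x : α // x ≠ b} →₀ ZMod 2) →ₗ[ZMod 2] ((Finset α →₀ ZMod 2) ⧸ G) :=
    G.mkQ.comp J with hK
  have hQbarmk : ∀ v, Qbar (Submodule.Quotient.mk v) = Q v := fun v => rfl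
  have h1 : Qbar.comp K = LinearMap.id := by
    apply Finsupp.lhom_ext
    intro T c
    simp only [LinearMap.comp_apply, LinearMap.id_apply, hK, Submodule.mkQ_apply]
    rw [hJs, hQbarmk, hQs]
    have : b ∉ T.map em := by simp [hem]
    rw [if_neg this, sub_of_map]
  have h2 : K.comp Qbar = LinearMap.id := by
    apply Submodule.linearMap_qext
    apply Finsupp.lhom_ext
    intro S c
    simp only [LinearMap.comp_apply, LinearMap.id_apply, Submodule.mkQ_apply]
    rw [hQbarmk, hQs]
    by_cases hbS : b ∈ S
    · rw [if_pos hbS]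
      simp only [map_zero, hK]
      symm
      rw [Submodule.Quotient.mk_eq_zero]
      have : (Finsupp.single S c : Finset α →₀ ZMod 2) = c • Finsupp.single S 1 := by
        simp [Finsupp.smul_single]
      rw [this]
      exact Submodule.smul_mem _ _ (Submodule.subset_span ⟨S, hbS, rfl⟩)
    · rw [if_neg hbS]
      simp only [hK, LinearMap.comp_apply, Submodule.mkQ_apply]
      rw [hJs, mapSub_of_not_mem b S hbS]
  set q : ((Finset α →₀ ZMod 2) ⧸ G) ≃ₗ[ZMod 2] (Finset {x : α // x ≠ b} →₀ ZMod 2) :=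
    LinearEquiv.ofLinear Qbar K h1 h2 with hq
  have hqmk : ∀ v, q (Submodule.Quotient.mk v) = Q v := fun v => rfl
  -- commutation of Q with ν
  have hQν : ∀ v, Q (ν v) = ν' (Q v) := by
    intro v
    induction v using Finsupp.induction_linear with
    | zero => simp
    | add f g hf hg => rw [map_add, map_add, map_add, hf, hg, map_add]
    | single S c =>
      have hsm : (Finsupp.single S c : Finset α →₀ ZMod 2) = c • Finsupp.single S 1 := by
        simp [Finsupp.smul_single]
      rw [hsm, map_smul, map_smul, map_smul, map_smul]
      congr 1
      rw [hν, map_sum, hQs]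
      by_cases hbS : b ∈ S
      · rw [if_pos hbS, map_zero]
        apply Finset.sum_eq_zero
        intro x hx
        rw [hQs, if_pos (Finset.mem_insert_of_mem hbS)]
      · rw [if_neg hbS, hν']
        have hbc : b ∈ Sᶜ := Finset.mem_compl.mpr hbS
        rw [← Finset.add_sum_erase _ _ hbc]
        rw [hQs, if_pos (Finset.mem_insert_self _ _), zero_add]
        calc ∑ x ∈ Sᶜ.erase b, Q (Finsupp.single (insert x S) 1)
            = ∑ x ∈ Sᶜ.erase b, Finsupp.single ((insert x S).subtype (· ≠ b)) 1 := by
              refine Finset.sum_congr rfl fun x hx => ?_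
              rw [hQs, if_neg]
              intro h
              rcases Finset.mem_insert.mp h with h | h
              · exact (Finset.mem_erase.mp hx).1 h.symm
              · exact hbS h
          _ = ∑ y ∈ (S.subtype (· ≠ b))ᶜ,
                Finsupp.single (insert y (S.subtype (· ≠ b))) 1 :=
              sum_reindex b S (fun T => Finsupp.single T 1)
  refine ⟨hinv, ⟨e, ?_, ?_⟩, ⟨q, ?_, ?_⟩⟩
  · intro S hbS hmem
    rw [heval, hPs, sub_erase]
  · rintro ⟨v, hv⟩ hv'
    rw [heval, heval, hPν v hv]
  · intro S hbS
    rw [hqmk, hQs, if_neg hbS]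
  · intro v
    rw [hqmk, hqmk, hQν]
end

section
/- Let h, g : ℤ × ℤ → ℕ be finitely supported and s an integer, and suppose h(i,j) = g(i,j) + g(i−1, j−4) + ε(i,j) for all (i,j), where ε(0, s−1) = ε(0, s+1) = 1 and ε(i,j) = 0 otherwise. Suppose moreover that h(i,j) = 0 whenever 2i − j ∉ {−s−1, −s+1}. Then g(i,j) = 0 unless j = 2i + s − 1; that is, writing a_i = g(i, 2i+s−1), one has h(i, 2i+s−1) = a_i + δ_{i,0} and h(i, 2i+s+1) = a_{i−1} + δ_{i,0}, and h vanishes everywhere else. -/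
/-- Knight-move decomposition on two diagonals.  If
`h(i,j) = g(i,j) + g(i-1,j-4) + ε(i,j)` with `ε` supported at `(0, s±1)` with value `1`,
and `h` is supported on the two diagonals `2i - j ∈ {-s-1, -s+1}`, then `g` is
concentrated on the single diagonal `j = 2i + s - 1`; writing `a_i = g(i, 2i+s-1)` one
has `h(i, 2i+s-1) = a_i + δ_{i,0}` and `h(i, 2i+s+1) = a_{i-1} + δ_{i,0}`. -/
theorem knight_move_thin (h g : ℤ × ℤ → ℕ) (s : ℤ)
    (hhfin : (Function.support h).Finite) (hgfin : (Function.support g).Finite)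
    (hdecomp : ∀ i j : ℤ, h (i, j) = g (i, j) + g (i - 1, j - 4) +
      (if i = 0 ∧ (j = s - 1 ∨ j = s + 1) then 1 else 0))
    (hthin : ∀ i j : ℤ, 2 * i - j ≠ -s - 1 → 2 * i - j ≠ -s + 1 → h (i, j) = 0) :
    (∀ i j : ℤ, j ≠ 2 * i + s - 1 → g (i, j) = 0) ∧
      (∀ i : ℤ, h (i, 2 * i + s - 1) = g (i, 2 * i + s - 1) + (if i = 0 then 1 else 0)) ∧
      (∀ i : ℤ, h (i, 2 * i + s + 1) = g (i - 1, 2 * i + s - 3) + (if i = 0 then 1 else 0)) := by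
  have key : ∀ i j : ℤ, j ≠ 2 * i + s - 1 → g (i, j) = 0 := by
    intro i j hj
    by_cases h2 : j = 2 * i + s + 1
    · -- use the point (i+1, 2i+s+5), where h vanishes and ε vanishes
      subst h2
      have hz : h (i + 1, 2 * i + s + 5) = 0 := by
        apply hthin <;> omega
      have hd := hdecomp (i + 1) (2 * i + s + 5)
      rw [hz] at hd
      have hε : ¬ (i + 1 = 0 ∧ (2 * i + s + 5 = s - 1 ∨ 2 * i + s + 5 = s + 1)) := by omega
      rw [if_neg hε] at hd
      have : g (i + 1 - 1, 2 * i + s + 5 - 4) = 0 := by omega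
      have he1 : i + 1 - 1 = i := by ring
      have he2 : 2 * i + s + 5 - 4 = 2 * i + s + 1 := by ring
      rwa [he1, he2] at this
    · have hz : h (i, j) = 0 := by
        apply hthin <;> omega
      have hd := hdecomp i j
      rw [hz] at hd
      omega
  refine ⟨key, ?_, ?_⟩
  · intro i
    have hd := hdecomp i (2 * i + s - 1)
    have hz : g (i - 1, 2 * i + s - 1 - 4) = 0 := by
      apply key; omega
    rw [hz] at hd
    by_cases hi : i = 0
    · subst hi
      rw [if_pos (by omega : (0:ℤ) = 0 ∧ (2 * 0 + s - 1 = s - 1 ∨ 2 * 0 + s - 1 = s + 1))] at hd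
      rw [if_pos rfl]
      omega
    · rw [if_neg (by omega : ¬ (i = 0 ∧ (2 * i + s - 1 = s - 1 ∨ 2 * i + s - 1 = s + 1)))] at hd
      rw [if_neg hi]
      omega
  · intro i
    have hd := hdecomp i (2 * i + s + 1)
    have hz : g (i, 2 * i + s + 1) = 0 := by
      apply key; omega
    rw [hz] at hd
    have he : (2 * i + s + 1 - 4 : ℤ) = 2 * i + s - 3 := by ring
    rw [he] at hd
    by_cases hi : i = 0
    · subst hi
      rw [if_pos (by omega)] at hd
      rw [if_pos rfl]
      omega
    · rw [if_neg (by omega : ¬ (i = 0 ∧ (2 * i + s + 1 = s - 1 ∨ 2 * i + s + 1 = s + 1)))] at hd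
      rw [if_neg hi]
      omega
end
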